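/- Let (m_j), (n_j) be the ℓ_1-parameters (m_1 = 2, n_1 = 1, m_{j+1} = m_j^{m_j}, n_{j+1} = 2^{2m_{j+1}} n_j) and fix j ≥ 2. Let 0 < ε < 1/m_j² and let x = Σ_{k∈F} c_k e_k be an (n_j, ε)-basic special convex combination. If f belongs to the minimal subset of c_00(ℕ) that contains ±e_i^* for all i ∈ ℕ and is closed under the operations ((S_{n_i+1}), m_i) for all indices i ≠ j only (i.e., f admits a tree analysis all of whose weights differ from m_j), then |f(x)| < 2/m_j². -/

import Mathlib

/-- `E < F` for finite sets of naturals: every element of `E` is less than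
every element of `F` (vacuously true if one of them is empty). -/
def FinsetLT (E F : Finset ℕ) : Prop := ∀ a ∈ E, ∀ b ∈ F, a < b

/-- The convolution `M * N` of two families of finite subsets of `ℕ`: it consists of `∅`
together with all unions `E₁ ∪ … ∪ E_k` where `E₁ < … < E_k` are nonempty sets in `N`
and `{min E₁, …, min E_k} ∈ M`. -/
def SchreierConv (M N : Set (Finset ℕ)) : Set (Finset ℕ) :=
  {E | E = ∅ ∨ ∃ (k : ℕ) (Es : Fin k → Finset ℕ),
    (∀ i, Es i ∈ N) ∧ (∀ i, (Es i).Nonempty) ∧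
    (∀ i j : Fin k, i < j → FinsetLT (Es i) (Es j)) ∧
    (Finset.image (fun i => sInf (↑(Es i) : Set ℕ)) Finset.univ) ∈ M ∧
    E = Finset.univ.biUnion Es}

/-- The first Schreier family `S₁ = {E : #E ≤ min E} ∪ {∅}`. -/
def SchreierOne : Set (Finset ℕ) := {E | ∀ k ∈ E, E.card ≤ k}

/-- The Schreier families: `S₀` = singletons and `∅`, `S₁` as above,
`S_{n+1} = S₁ * S_n`. -/
def Schreier : ℕ → Set (Finset ℕ)
  | 0 => {E | E.card ≤ 1}
  | 1 => SchreierOne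
  | n + 2 => SchreierConv SchreierOne (Schreier (n + 1))

/-- The minimum of the support of an element of `c₀₀(ℕ) = ℕ →₀ ℝ`. -/
noncomputable def minsupp (f : ℕ →₀ ℝ) : ℕ := sInf (↑f.support : Set ℕ)

/-- The maximum of the support of an element of `c₀₀(ℕ)`. -/
noncomputable def maxsupp (f : ℕ →₀ ℝ) : ℕ := f.support.sup id

/-- The action of a functional `f ∈ c₀₀(ℕ)` on a vector `x ∈ c₀₀(ℕ)`:
`f(x) = ∑ₖ f(k)·x(k)`. -/
noncomputable def ev (f x : ℕ →₀ ℝ) : ℝ := ∑ k ∈ f.support, f k * x k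

/-- The seminorm induced on `c₀₀(ℕ)` by a set `W` of functionals:
`‖x‖_W = sup {f(x) : f ∈ W}`. -/
noncomputable def WNorm (W : Set (ℕ →₀ ℝ)) (x : ℕ →₀ ℝ) : ℝ :=
  sSup ((fun f => ev f x) '' W)

/-- A finite sequence of functionals in `c₀₀(ℕ)` is `S_n`-admissible if the supports are
nonempty and successive and the set of minima of the supports belongs to `S_n`. -/
def IsAdmissible (n : ℕ) {d : ℕ} (f : Fin d → (ℕ →₀ ℝ)) : Prop :=
  (∀ l, f l ≠ 0) ∧
  (∀ l l' : Fin d, l < l' → ∀ a ∈ (f l).support, ∀ b ∈ (f l').support, a < b) ∧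
  (Finset.image (fun l => minsupp (f l)) Finset.univ) ∈ Schreier n

/-- The sequence `m₁ = b`, `m_{j+1} = m_j ^ (m_j)` (0-indexed in Lean: `mpar b 0 = m₁`). -/
def mpar (b : ℕ) : ℕ → ℕ
  | 0 => b
  | j + 1 => mpar b j ^ mpar b j

/-- The sequence `n₁ = 1`, `n_{j+1} = 2 ^ (2 m_{j+1}) · n_j` (0-indexed in Lean). -/
def npar (b : ℕ) : ℕ → ℕ
  | 0 => 1
  | j + 1 => 2 ^ (2 * mpar b (j + 1)) * npar b j

/-- The coefficients `(c_k)_{k ∈ F}` of an `(n, ε)`-basic special convex combination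
`∑_{k ∈ F} c_k e_k`: a convex combination with `F ∈ S_n` and `∑_{k ∈ G} c_k < ε` for every
`G ⊆ F` with `G ∈ S_{n-1}`. -/
def IsBSCC (n : ℕ) (ε : ℝ) (F : Finset ℕ) (c : ℕ → ℝ) : Prop :=
  (∀ k ∈ F, 0 ≤ c k) ∧ (∑ k ∈ F, c k) = 1 ∧ F ∈ Schreier n ∧
  ∀ G ⊆ F, G ∈ Schreier (n - 1) → ∑ k ∈ G, c k < ε

/-- The vector `∑_{k ∈ F} c_k e_k ∈ c₀₀(ℕ)`. -/
noncomputable def bvec (F : Finset ℕ) (c : ℕ → ℝ) : ℕ →₀ ℝ :=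
  ∑ k ∈ F, c k • (Finsupp.single k 1 : ℕ →₀ ℝ)

/-- The minimal subset of `c₀₀(ℕ)` containing `±e_i^*` and closed under the operations
`(S_{n_i + 1}, m_i)` for all indices `i ≠ j` only (over the `ℓ₁`-parameters): functionals
admitting a tree analysis all of whose weights differ from `m_j`. -/
inductive WAux1Avoid (j : ℕ) : (ℕ →₀ ℝ) → Prop
  | pos (i : ℕ) : WAux1Avoid j (Finsupp.single i 1)
  | neg (i : ℕ) : WAux1Avoid j (-(Finsupp.single i 1))
  | op (i d : ℕ) (hij : i ≠ j) (g : Fin d → ℕ →₀ ℝ) (hg : ∀ l, WAux1Avoid j (g l))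
      (hadm : IsAdmissible (npar 2 i + 1) g) :
      WAux1Avoid j ((mpar 2 i : ℝ)⁻¹ • ∑ l, g l)

lemma schreier_empty (n : ℕ) : (∅ : Finset ℕ) ∈ Schreier n := by
  match n with
  | 0 => simp [Schreier]
  | 1 => intro k hk; simp at hk
  | n + 2 => exact Or.inl rfl

lemma schreier_singleton {n' : ℕ} (hn' : 1 ≤ n') (m : ℕ) : ({n'} : Finset ℕ) ∈ Schreier m := by
  match m with
  | 0 => simp [Schreier]
  | 1 => intro k hk; simp at hk; simpa [hk] using hn'
  | m + 2 =>
    refine Or.inr ⟨1, fun _ => {n'}, fun _ => schreier_singleton hn' (m+1), fun _ => ⟨n', by simp⟩,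
      fun i j hij => absurd hij (by omega), ?_, by simp⟩
    have : sInf (({n'} : Finset ℕ) : Set ℕ) = n' := by simp
    rw [show (Finset.image (fun _ : Fin 1 => sInf (({n'} : Finset ℕ) : Set ℕ)) Finset.univ) = {n'} by simp [this]]
    intro k hk; simp at hk; simpa [hk] using hn'
lemma schreier_not_mem_zero {n : ℕ} (hn : 1 ≤ n) {E : Finset ℕ} (hE : E ∈ Schreier n) :
    0 ∉ E := by
  intro h0
  match n with
  | 1 =>
    have := hE 0 h0
    simp [Finset.card_eq_zero] at this
    simp [this] at h0
  | n + 2 =>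
    rcases hE with rfl | ⟨k, Es, hN, hne, hord, hM, hE⟩
    · simp at h0
    subst hE
    simp only [Finset.mem_biUnion] at h0
    obtain ⟨i, -, hi⟩ := h0
    have h1 : sInf ((Es i : Set ℕ)) = 0 := Nat.eq_zero_of_le_zero (Nat.sInf_le hi)
    have h2 : (0:ℕ) ∈ Finset.image (fun i => sInf ((Es i : Set ℕ))) Finset.univ := by
      exact Finset.mem_image.2 ⟨i, Finset.mem_univ i, h1⟩
    have := hM 0 h2
    simp [Finset.card_eq_zero] at this
    simp [this] at h2

lemma schreier_succ (a : ℕ) : Schreier (a + 2) = SchreierConv SchreierOne (Schreier (a + 1)) := rfl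

lemma schreier_subsingleton {G : Finset ℕ} {n' : ℕ} (hG : G ⊆ {n'}) (hn' : 1 ≤ n')
    (m : ℕ) : G ∈ Schreier m := by
  rcases Finset.subset_singleton_iff.1 hG with rfl | rfl
  · exact schreier_empty m
  · exact schreier_singleton hn' m

/-- `A` is obtained from `B` by taking a subset and spreading to the right. -/
def SpreadSub (A B : Finset ℕ) : Prop :=
  ∃ φ : ℕ → ℕ, (∀ a ∈ A, φ a ∈ B) ∧ (∀ a ∈ A, φ a ≤ a) ∧
    (∀ a ∈ A, ∀ b ∈ A, a < b → φ a < φ b)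

lemma spreadSub_card {A B : Finset ℕ} (h : SpreadSub A B) : A.card ≤ B.card := by
  obtain ⟨φ, h1, _, h3⟩ := h
  have hinj : Set.InjOn φ A := by
    intro a ha b hb hab
    by_contra hne
    rcases lt_or_gt_of_ne hne with h | h
    · exact absurd hab (ne_of_lt (h3 a ha b hb h))
    · exact absurd hab.symm (ne_of_lt (h3 b hb a ha h))
  calc A.card = (A.image φ).card := (Finset.card_image_of_injOn hinj).symm
    _ ≤ B.card := Finset.card_le_card (by intro x hx; obtain ⟨a, ha, rfl⟩ := Finset.mem_image.1 hx; exact h1 a ha)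

lemma schreierOne_spreadSub {A B : Finset ℕ} (hB : B ∈ SchreierOne) (h : SpreadSub A B) :
    A ∈ SchreierOne := by
  intro k hk
  obtain ⟨φ, h1, h2, h3⟩ := h
  calc A.card ≤ B.card := spreadSub_card ⟨φ, h1, h2, h3⟩
    _ ≤ φ k := hB _ (h1 k hk)
    _ ≤ k := h2 k hk
/-- Membership in a Schreier convolution from a family of possibly-empty blocks. -/
lemma mem_schreierConv_of {M N : Set (Finset ℕ)} {k : ℕ} {Es : Fin k → Finset ℕ}
    (h1 : ∀ i, Es i ∈ N)
    (h2 : ∀ i i' : Fin k, i < i' → FinsetLT (Es i) (Es i'))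
    (h3 : (Finset.univ.filter (fun i => (Es i).Nonempty)).image
        (fun i => sInf ((Es i : Set ℕ))) ∈ M) :
    Finset.univ.biUnion Es ∈ SchreierConv M N := by
  classical
  set I : Finset (Fin k) := Finset.univ.filter (fun i => (Es i).Nonempty) with hI
  set e := I.orderIsoOfFin rfl with he
  refine Or.inr ⟨I.card, fun r => Es (e r), fun r => h1 _, ?_, ?_, ?_, ?_⟩
  · intro r
    exact (Finset.mem_filter.1 (e r).2).2
  · intro r r' hrr'
    exact h2 _ _ (e.strictMono hrr')
  · have himeq : (Finset.image (fun r : Fin I.card => sInf ((Es (e r) : Set ℕ))) Finset.univ)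
        = I.image (fun i => sInf ((Es i : Set ℕ))) := by
      ext y
      simp only [Finset.mem_image, Finset.mem_univ, true_and]
      constructor
      · rintro ⟨r, rfl⟩; exact ⟨e r, (e r).2, rfl⟩
      · rintro ⟨i, hi, rfl⟩
        obtain ⟨r, hr⟩ := e.surjective ⟨i, hi⟩
        exact ⟨r, by rw [hr]⟩
    rw [himeq]; exact h3
  · ext x
    simp only [Finset.mem_biUnion, Finset.mem_univ, true_and]
    constructor
    · rintro ⟨i, hx⟩
      have hi : i ∈ I := by simp [hI]; exact ⟨x, hx⟩
      obtain ⟨r, hr⟩ := e.surjective ⟨i, hi⟩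
      exact ⟨r, by rw [hr]; exact hx⟩
    · rintro ⟨r, hx⟩; exact ⟨e r, hx⟩

/-- The minima of nonempty ordered blocks form a spread-subset of any strictly
monotone choice of witnesses below them. -/
lemma spreadSub_of_blocks {k : ℕ} {A : Fin k → Finset ℕ} {Bm : Fin k → ℕ}
    (hord : ∀ i i' : Fin k, i < i' → FinsetLT (A i) (A i'))
    (hle : ∀ i, (A i).Nonempty → Bm i ≤ sInf ((A i : Set ℕ)))
    (hmono : StrictMono Bm) :
    SpreadSub ((Finset.univ.filter (fun i => (A i).Nonempty)).image
        (fun i => sInf ((A i : Set ℕ)))) (Finset.univ.image Bm) := by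
  classical
  have hmem : ∀ i : Fin k, (A i).Nonempty → sInf ((A i : Set ℕ)) ∈ A i := by
    intro i hi
    exact Nat.sInf_mem (by exact_mod_cast Finset.coe_nonempty.2 hi)
  set P : ℕ → Prop := fun x => ∃ i : Fin k, (A i).Nonempty ∧ sInf ((A i : Set ℕ)) = x with hP
  refine ⟨fun x => if h : P x then Bm h.choose else 0, ?_, ?_, ?_⟩
  · intro a ha
    simp only [Finset.mem_image, Finset.mem_filter, Finset.mem_univ, true_and] at ha
    obtain ⟨i, hi, rfl⟩ := ha
    have hp : P (sInf ((A i : Set ℕ))) := ⟨i, hi, rfl⟩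
    simp only [dif_pos hp]
    exact Finset.mem_image.2 ⟨hp.choose, Finset.mem_univ _, rfl⟩
  · intro a ha
    simp only [Finset.mem_image, Finset.mem_filter, Finset.mem_univ, true_and] at ha
    obtain ⟨i, hi, rfl⟩ := ha
    have hp : P (sInf ((A i : Set ℕ))) := ⟨i, hi, rfl⟩
    simp only [dif_pos hp]
    exact le_trans (hle _ hp.choose_spec.1) (le_of_eq hp.choose_spec.2)
  · intro a ha b hb hab
    simp only [Finset.mem_image, Finset.mem_filter, Finset.mem_univ, true_and] at ha hb
    obtain ⟨i, hi, rfl⟩ := ha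
    obtain ⟨i', hi', rfl⟩ := hb
    have hpa : P (sInf ((A i : Set ℕ))) := ⟨i, hi, rfl⟩
    have hpb : P (sInf ((A i' : Set ℕ))) := ⟨i', hi', rfl⟩
    simp only [dif_pos hpa, dif_pos hpb]
    apply hmono
    -- hpa.choose < hpb.choose
    obtain ⟨hia, hea⟩ := hpa.choose_spec
    obtain ⟨hib, heb⟩ := hpb.choose_spec
    by_contra hcon
    push_neg at hcon
    rcases lt_or_eq_of_le hcon with hlt | heq
    · have := hord _ _ hlt _ (hmem _ hib) _ (hmem _ hia)
      omega
    · rw [heq] at heb; omega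
lemma schreier_spreadSub : ∀ n : ℕ, ∀ {A B : Finset ℕ}, B ∈ Schreier n → SpreadSub A B →
    A ∈ Schreier n := by
  intro n
  induction n using Nat.strong_induction_on with
  | _ n ih =>
    match n with
    | 0 =>
      intro A B hB h
      exact le_trans (spreadSub_card h) hB
    | 1 =>
      intro A B hB h
      exact schreierOne_spreadSub hB h
    | n + 2 =>
      intro A B hB h
      classical
      obtain ⟨φ, hφ1, hφ2, hφ3⟩ := h
      rcases hB with rfl | ⟨k, Es, hN, hne, hord, hM, rfl⟩
      · have : A = ∅ := Finset.eq_empty_of_forall_notMem (fun a ha => by simpa using hφ1 a ha)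
        rw [this]; exact schreier_empty _
      set As : Fin k → Finset ℕ := fun i => A.filter (fun a => φ a ∈ Es i) with hAs
      have hAcover : A = Finset.univ.biUnion As := by
        ext a
        simp only [hAs, Finset.mem_biUnion, Finset.mem_filter, Finset.mem_univ, true_and]
        constructor
        · intro ha
          have := hφ1 a ha
          simp only [Finset.mem_biUnion, Finset.mem_univ, true_and] at this
          obtain ⟨i, hi⟩ := this
          exact ⟨i, ha, hi⟩
        · rintro ⟨i, ha, -⟩; exact ha
      have hAord : ∀ i i' : Fin k, i < i' → FinsetLT (As i) (As i') := by
        intro i i' hii' a ha b hb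
        simp only [hAs, Finset.mem_filter] at ha hb
        have h1 : φ a < φ b := hord i i' hii' _ ha.2 _ hb.2
        by_contra hcon
        push_neg at hcon
        rcases lt_or_eq_of_le hcon with hlt | rfl
        · exact absurd h1 (not_lt_of_gt (hφ3 b hb.1 a ha.1 hlt))
        · exact absurd h1 (lt_irrefl _)
      have hAmem : ∀ i, As i ∈ Schreier (n + 1) := by
        intro i
        refine ih (n+1) (by omega) (hne i |>.elim fun _ _ => hN i) ?_
        · exact ⟨φ, fun a ha => (Finset.mem_filter.1 ha).2,
            fun a ha => hφ2 a (Finset.mem_filter.1 ha).1,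
            fun a ha b hb => hφ3 a (Finset.mem_filter.1 ha).1 b (Finset.mem_filter.1 hb).1⟩
      rw [hAcover]
      refine mem_schreierConv_of hAmem hAord ?_
      refine schreierOne_spreadSub hM ?_
      refine spreadSub_of_blocks hAord ?_ ?_
      · intro i hi
        obtain ⟨a, ha⟩ := hi
        have hmin : sInf ((As i : Set ℕ)) ∈ As i :=
          Nat.sInf_mem (by exact_mod_cast Finset.coe_nonempty.2 ⟨a, ha⟩)
        have h1 : φ (sInf ((As i : Set ℕ))) ∈ Es i := (Finset.mem_filter.1 hmin).2
        calc sInf ((Es i : Set ℕ)) ≤ φ (sInf ((As i : Set ℕ))) := Nat.sInf_le h1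
          _ ≤ sInf ((As i : Set ℕ)) := hφ2 _ (Finset.mem_filter.1 hmin).1
      · intro i i' hii'
        have h1 := hne i
        have h2 := hne i'
        have m1 : sInf ((Es i : Set ℕ)) ∈ Es i :=
          Nat.sInf_mem (by exact_mod_cast Finset.coe_nonempty.2 h1)
        have m2 : sInf ((Es i' : Set ℕ)) ∈ Es i' :=
          Nat.sInf_mem (by exact_mod_cast Finset.coe_nonempty.2 h2)
        exact hord i i' hii' _ m1 _ m2

lemma schreier_mono_succ {n : ℕ} (hn : 1 ≤ n) : Schreier n ⊆ Schreier (n + 1) := by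
  intro E hE
  rcases eq_or_ne E ∅ with rfl | hne
  · exact schreier_empty _
  obtain ⟨n', rfl⟩ : ∃ n', n = n' + 1 := ⟨n - 1, by omega⟩
  rw [schreier_succ]
  have hEne : E.Nonempty := Finset.nonempty_iff_ne_empty.2 hne
  have h0 : 0 ∉ E := schreier_not_mem_zero hn hE
  have hcover : E = Finset.univ.biUnion (fun _ : Fin 1 => E) := by simp
  rw [hcover]
  refine mem_schreierConv_of (fun _ => hE) (fun i i' hii' => absurd hii' (by omega)) ?_
  intro y hy
  simp only [Finset.mem_image] at hy
  obtain ⟨i, hi, rfl⟩ := hy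
  have hmin : sInf ((E : Set ℕ)) ∈ E := Nat.sInf_mem (by exact_mod_cast Finset.coe_nonempty.2 hEne)
  have h1 : 1 ≤ sInf ((E : Set ℕ)) := by
    rcases Nat.eq_zero_or_pos (sInf ((E : Set ℕ))) with h | h
    · rw [h] at hmin; exact absurd hmin h0
    · exact h
  calc _ ≤ (Finset.univ.filter (fun _ : Fin 1 => E.Nonempty)).card := Finset.card_image_le
    _ ≤ (Finset.univ : Finset (Fin 1)).card := Finset.card_filter_le _ _
    _ = 1 := by simp
    _ ≤ sInf ((E : Set ℕ)) := h1

lemma schreier_mono {a b : ℕ} (ha : 1 ≤ a) (hab : a ≤ b) : Schreier a ⊆ Schreier b := by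
  induction b, hab using Nat.le_induction with
  | base => exact fun _ h => h
  | succ b hb ih => exact fun E hE => schreier_mono_succ (by omega) (ih hE)
lemma sInf_mem_finset {G : Finset ℕ} (h : G.Nonempty) : sInf ((G : Set ℕ)) ∈ G :=
  Nat.sInf_mem (by exact_mod_cast Finset.coe_nonempty.2 h)

lemma schreier_comp : ∀ b : ℕ, 1 ≤ b → ∀ (a d : ℕ) (G : Fin d → Finset ℕ),
    (∀ l, G l ∈ Schreier a) →
    (∀ l l' : Fin d, l < l' → FinsetLT (G l) (G l')) →
    ((Finset.univ.filter (fun l => (G l).Nonempty)).image (fun l => sInf ((G l : Set ℕ)))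
      ∈ Schreier b) →
    Finset.univ.biUnion G ∈ Schreier (a + b) := by
  intro b
  induction b with
  | zero => omega
  | succ b' ih =>
    intro hb a d G hGa hGord hM
    classical
    match b', ih with
    | 0, _ =>
      -- base case b = 1
      match a, hGa with
      | 0, hGa =>
        have hcov : Finset.univ.biUnion G
            = (Finset.univ.filter (fun l => (G l).Nonempty)).image
              (fun l => sInf ((G l : Set ℕ))) := by
          ext x
          simp only [Finset.mem_biUnion, Finset.mem_image, Finset.mem_filter, Finset.mem_univ,
            true_and]
          constructor
          · rintro ⟨l, hl⟩
            refine ⟨l, ⟨x, hl⟩, ?_⟩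
            have hcard := hGa l
            have : sInf ((G l : Set ℕ)) ∈ G l := sInf_mem_finset ⟨x, hl⟩
            exact Finset.card_le_one.1 hcard _ this _ hl
          · rintro ⟨l, hl, rfl⟩
            exact ⟨l, sInf_mem_finset hl⟩
        rw [hcov]
        exact hM
      | a' + 1, hGa =>
        rw [show a' + 1 + 1 = a' + 2 from rfl, schreier_succ]
        exact mem_schreierConv_of hGa hGord hM
    | b'' + 1, ih =>
      -- inductive step: b = b'' + 2
      rcases hM with hemp | ⟨p, Ms, hMsN, hMsne, hMsord, hMsM, heq⟩
      · have : Finset.univ.biUnion G = ∅ := by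
          ext x
          simp only [Finset.mem_biUnion, Finset.mem_univ, true_and, Finset.notMem_empty,
            iff_false]
          rintro ⟨l, hl⟩
          have : sInf ((G l : Set ℕ)) ∈ (Finset.univ.filter (fun l => (G l).Nonempty)).image
              (fun l => sInf ((G l : Set ℕ))) :=
            Finset.mem_image.2 ⟨l, Finset.mem_filter.2 ⟨Finset.mem_univ _, ⟨x, hl⟩⟩, rfl⟩
          rw [hemp] at this
          simp at this
        rw [this]
        exact schreier_empty _
      set H : Fin p → Finset ℕ := fun q =>
        Finset.univ.biUnion (fun l => (G l).filter (fun _ => sInf ((G l : Set ℕ)) ∈ Ms q))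
        with hH
      -- every element of Ms q lies in H q
      have hMssub : ∀ q, Ms q ⊆ H q := by
        intro q x hx
        have hx' : x ∈ Finset.univ.biUnion Ms := Finset.mem_biUnion.2 ⟨q, Finset.mem_univ _, hx⟩
        rw [← heq] at hx'
        simp only [Finset.mem_image, Finset.mem_filter, Finset.mem_univ, true_and] at hx'
        obtain ⟨l, hl, hlx⟩ := hx'
        refine Finset.mem_biUnion.2 ⟨l, Finset.mem_univ _, ?_⟩
        refine Finset.mem_filter.2 ⟨?_, by rw [hlx]; exact hx⟩
        rw [← hlx] at hx ⊢
        exact sInf_mem_finset hl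
      have hHne : ∀ q, (H q).Nonempty := by
        intro q
        obtain ⟨x, hx⟩ := hMsne q
        exact ⟨x, hMssub q hx⟩
      -- each H q is in Schreier (a + (b'' + 1)) by the inductive hypothesis
      have hHmem : ∀ q, H q ∈ Schreier (a + (b'' + 1)) := by
        intro q
        refine ih (by omega) a d _ ?_ ?_ ?_
        · intro l
          by_cases hc : sInf ((G l : Set ℕ)) ∈ Ms q
          · rw [Finset.filter_true_of_mem (fun _ _ => hc)]; exact hGa l
          · rw [Finset.filter_false_of_mem (fun _ _ => hc)]; exact schreier_empty _
        · intro l l' hll' x hx y hy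
          exact hGord l l' hll' x (Finset.mem_filter.1 hx).1 y (Finset.mem_filter.1 hy).1
        · have : (Finset.univ.filter
              (fun l => ((G l).filter (fun _ => sInf ((G l : Set ℕ)) ∈ Ms q)).Nonempty)).image
              (fun l => sInf (((G l).filter (fun _ => sInf ((G l : Set ℕ)) ∈ Ms q) : Finset ℕ)
                : Set ℕ)) = Ms q := by
            ext y
            simp only [Finset.mem_image, Finset.mem_filter, Finset.mem_univ, true_and]
            constructor
            · rintro ⟨l, hl, rfl⟩
              obtain ⟨x, hx⟩ := hl
              have hc : sInf ((G l : Set ℕ)) ∈ Ms q := (Finset.mem_filter.1 hx).2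
              rw [Finset.filter_true_of_mem (fun _ _ => hc)]
              exact hc
            · intro hy
              have hy' : y ∈ Finset.univ.biUnion Ms :=
                Finset.mem_biUnion.2 ⟨q, Finset.mem_univ _, hy⟩
              rw [← heq] at hy'
              simp only [Finset.mem_image, Finset.mem_filter, Finset.mem_univ, true_and] at hy'
              obtain ⟨l, hl, hly⟩ := hy'
              have hc : sInf ((G l : Set ℕ)) ∈ Ms q := by rw [hly]; exact hy
              refine ⟨l, ?_, ?_⟩ <;>
                rw [Finset.filter_true_of_mem (fun _ _ => hc)]
              · exact hl
              · exact hly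
          rw [this]
          exact hMsN q
      -- sInf of H q equals sInf of Ms q
      have hHinf : ∀ q, sInf ((H q : Set ℕ)) = sInf ((Ms q : Set ℕ)) := by
        intro q
        apply le_antisymm
        · exact Nat.sInf_le (hMssub q (sInf_mem_finset (hMsne q)))
        · have hm : sInf ((H q : Set ℕ)) ∈ H q := sInf_mem_finset (hHne q)
          simp only [hH, Finset.mem_biUnion, Finset.mem_univ, true_and] at hm
          obtain ⟨l, hl⟩ := hm
          have h1 : sInf ((G l : Set ℕ)) ∈ Ms q := (Finset.mem_filter.1 hl).2
          have h2 : sInf ((H q : Set ℕ)) ∈ G l := (Finset.mem_filter.1 hl).1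
          exact le_trans (Nat.sInf_le h1) (Nat.sInf_le h2)
      -- ordering of the H q
      have hHord : ∀ q q' : Fin p, q < q' → FinsetLT (H q) (H q') := by
        intro q q' hqq' x hx y hy
        simp only [hH, Finset.mem_biUnion, Finset.mem_univ, true_and] at hx hy
        obtain ⟨l, hl⟩ := hx
        obtain ⟨l', hl'⟩ := hy
        have h1 : sInf ((G l : Set ℕ)) ∈ Ms q := (Finset.mem_filter.1 hl).2
        have h2 : sInf ((G l' : Set ℕ)) ∈ Ms q' := (Finset.mem_filter.1 hl').2
        have hll' : l < l' := by
          have hlt : sInf ((G l : Set ℕ)) < sInf ((G l' : Set ℕ)) :=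
            hMsord q q' hqq' _ h1 _ h2
          by_contra hcon
          push_neg at hcon
          rcases lt_or_eq_of_le hcon with hlt2 | rfl
          · have hne1 : (G l).Nonempty := ⟨x, (Finset.mem_filter.1 hl).1⟩
            have hne2 : (G l').Nonempty := ⟨y, (Finset.mem_filter.1 hl').1⟩
            have := hGord l' l hlt2 _ (sInf_mem_finset hne2) _ (sInf_mem_finset hne1)
            omega
          · omega
        exact hGord l l' hll' x (Finset.mem_filter.1 hl).1 y (Finset.mem_filter.1 hl').1
      -- total union
      have hcov : Finset.univ.biUnion G = Finset.univ.biUnion H := by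
        ext x
        simp only [Finset.mem_biUnion, Finset.mem_univ, true_and]
        constructor
        · rintro ⟨l, hl⟩
          have h1 : sInf ((G l : Set ℕ)) ∈ Finset.univ.biUnion Ms := by
            rw [← heq]
            exact Finset.mem_image.2 ⟨l, Finset.mem_filter.2 ⟨Finset.mem_univ _, ⟨x, hl⟩⟩, rfl⟩
          obtain ⟨q, -, hq⟩ := Finset.mem_biUnion.1 h1
          refine ⟨q, ?_⟩
          simp only [hH, Finset.mem_biUnion, Finset.mem_univ, true_and]
          exact ⟨l, Finset.mem_filter.2 ⟨hl, hq⟩⟩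
        · rintro ⟨q, hq⟩
          simp only [hH, Finset.mem_biUnion, Finset.mem_univ, true_and] at hq
          obtain ⟨l, hl⟩ := hq
          exact ⟨l, (Finset.mem_filter.1 hl).1⟩
      rw [hcov, show a + (b'' + 1 + 1) = (a + (b'' + 1)) + 1 by omega,
        show a + (b'' + 1) + 1 = (a + b'') + 1 + 1 by omega]
      rw [schreier_succ]
      refine mem_schreierConv_of (N := Schreier (a + b'' + 1)) ?_ hHord ?_
      · intro q
        have := hHmem q
        rwa [show a + (b'' + 1) = a + b'' + 1 by omega] at this
      · have : (Finset.univ.filter (fun q => (H q).Nonempty)).image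
            (fun q => sInf ((H q : Set ℕ)))
            = Finset.univ.image (fun q => sInf ((Ms q : Set ℕ))) := by
          ext y
          simp only [Finset.mem_image, Finset.mem_filter, Finset.mem_univ, true_and]
          constructor
          · rintro ⟨q, -, rfl⟩; exact ⟨q, (hHinf q).symm⟩
          · rintro ⟨q, rfl⟩; exact ⟨q, hHne q, hHinf q⟩
        rw [this]
        exact hMsM
/-- The exponent of `m_j = 2 ^ epow j`. -/
def epow : ℕ → ℕ
  | 0 => 1
  | j + 1 => epow j * mpar 2 j

lemma mpar_eq_two_pow (j : ℕ) : mpar 2 j = 2 ^ epow j := by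
  induction j with
  | zero => rfl
  | succ j ih =>
    show mpar 2 j ^ mpar 2 j = 2 ^ (epow j * mpar 2 j)
    rw [ih, ← pow_mul]

lemma epow_pos (j : ℕ) : 1 ≤ epow j := by
  induction j with
  | zero => exact le_refl 1
  | succ j ih =>
    have h2 : 2 ≤ mpar 2 j := by
      rw [mpar_eq_two_pow]
      calc 2 = 2 ^ 1 := rfl
        _ ≤ 2 ^ epow j := Nat.pow_le_pow_right (by norm_num) ih
    calc 1 ≤ epow j := ih
      _ ≤ epow j * mpar 2 j := Nat.le_mul_of_pos_right _ (by omega)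

lemma mpar_two_le (j : ℕ) : 2 ≤ mpar 2 j := by
  rw [mpar_eq_two_pow]
  calc 2 = 2 ^ 1 := rfl
    _ ≤ 2 ^ epow j := Nat.pow_le_pow_right (by norm_num) (epow_pos j)

lemma epow_succ_ge (j : ℕ) : 2 * epow j ≤ epow (j + 1) := by
  show 2 * epow j ≤ epow j * mpar 2 j
  calc 2 * epow j = epow j * 2 := by ring
    _ ≤ epow j * mpar 2 j := Nat.mul_le_mul_left _ (mpar_two_le j)

lemma epow_mono : Monotone epow := by
  apply monotone_nat_of_le_succ
  intro j
  have := epow_succ_ge j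
  omega

lemma epow_ge_of_gt {i j : ℕ} (h : j < i) : 2 * epow j ≤ epow i :=
  le_trans (epow_succ_ge j) (epow_mono h)

lemma npar_pos (b j : ℕ) : 1 ≤ npar b j := by
  induction j with
  | zero => exact le_refl 1
  | succ j ih =>
    show 1 ≤ 2 ^ (2 * mpar b (j + 1)) * npar b j
    have h1 : 0 < 2 ^ (2 * mpar b (j + 1)) := Nat.pow_pos (by omega)
    exact Nat.one_le_iff_ne_zero.2 (Nat.mul_ne_zero (by omega) (by omega))

lemma npar_mono (b : ℕ) : Monotone (npar b) := by
  apply monotone_nat_of_le_succ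
  intro j
  show npar b j ≤ 2 ^ (2 * mpar b (j + 1)) * npar b j
  exact Nat.le_mul_of_pos_left _ (Nat.pow_pos (by omega))
lemma sum_apply_of_mem {d : ℕ} {g : Fin d → ℕ →₀ ℝ}
    (hord : ∀ l l' : Fin d, l < l' → ∀ a ∈ (g l).support, ∀ b ∈ (g l').support, a < b)
    {l₀ : Fin d} {k : ℕ} (hk : k ∈ (g l₀).support) :
    (∑ l, g l) k = g l₀ k := by
  classical
  rw [Finsupp.finset_sum_apply]
  refine Finset.sum_eq_single l₀ ?_ (fun h => absurd (Finset.mem_univ _) h)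
  intro l _ hl
  by_contra hne
  have hls : k ∈ (g l).support := Finsupp.mem_support_iff.2 hne
  rcases lt_or_gt_of_ne hl with h | h
  · exact lt_irrefl k (hord l l₀ h _ hls _ hk)
  · exact lt_irrefl k (hord l₀ l h _ hk _ hls)

lemma waux_abs_le_one {j : ℕ} {f : ℕ →₀ ℝ} (hf : WAux1Avoid j f) (k : ℕ) : |f k| ≤ 1 := by
  induction hf with
  | pos i =>
    rw [Finsupp.single_apply]
    split <;> simp
  | neg i =>
    rw [Finsupp.neg_apply, abs_neg, Finsupp.single_apply]
    split <;> simp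
  | op i d hij g hg hadm ih =>
    rw [Finsupp.smul_apply, smul_eq_mul, abs_mul]
    have hm : (2:ℝ) ≤ (mpar 2 i : ℝ) := by exact_mod_cast mpar_two_le i
    have hminv : |((mpar 2 i : ℝ))⁻¹| ≤ 1 := by
      rw [abs_inv, abs_of_nonneg (by positivity)]
      rw [inv_le_one_iff₀]
      right; linarith
    have hsum : |(∑ l, g l) k| ≤ 1 := by
      by_cases hc : ∃ l, k ∈ (g l).support
      · obtain ⟨l₀, hl₀⟩ := hc
        rw [sum_apply_of_mem hadm.2.1 hl₀]
        exact ih l₀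
      · push_neg at hc
        rw [Finsupp.finset_sum_apply]
        rw [Finset.sum_eq_zero (fun l _ => Finsupp.notMem_support_iff.1 (hc l))]
        simp
    calc |((mpar 2 i : ℝ))⁻¹| * |(∑ l, g l) k| ≤ 1 * 1 :=
      mul_le_mul hminv hsum (abs_nonneg _) (by norm_num)
    _ = 1 := by norm_num
lemma key_lemma {j : ℕ} (hj : 1 ≤ j) {f : ℕ →₀ ℝ} (hf : WAux1Avoid j f) :
    ∀ s : ℕ, s ≤ 2 * epow j → ∀ G : Finset ℕ,
      (∀ k ∈ G, k ∈ f.support ∧ 0 < k ∧ (((2:ℝ) ^ s)⁻¹ < |f k|)) →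
      G ∈ Schreier (s * (npar 2 (j - 1) + 1)) := by
  induction hf with
  | pos i =>
    intro s hs G hG
    rcases G.eq_empty_or_nonempty with rfl | ⟨k0, hk0⟩
    · exact schreier_empty _
    have hi : k0 = i := by
      have := (hG k0 hk0).1
      rwa [Finsupp.support_single_ne_zero _ (by norm_num), Finset.mem_singleton] at this
    have hipos : 1 ≤ i := by have := (hG k0 hk0).2.1; omega
    refine schreier_subsingleton (fun x hx => ?_) hipos _
    have := (hG x hx).1
    rwa [Finsupp.support_single_ne_zero _ (by norm_num)] at this
  | neg i =>
    intro s hs G hG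
    rcases G.eq_empty_or_nonempty with rfl | ⟨k0, hk0⟩
    · exact schreier_empty _
    have hsupp : (-(Finsupp.single i (1:ℝ))).support = {i} := by
      rw [Finsupp.support_neg, Finsupp.support_single_ne_zero _ (by norm_num)]
    have hi : k0 = i := by
      have := (hG k0 hk0).1
      rwa [hsupp, Finset.mem_singleton] at this
    have hipos : 1 ≤ i := by have := (hG k0 hk0).2.1; omega
    refine schreier_subsingleton (fun x hx => ?_) hipos _
    have := (hG x hx).1
    rwa [hsupp] at this
  | op i d hij g hg hadm ih =>
    intro s hs G hG
    classical
    set M : ℝ := (mpar 2 i : ℝ) with hM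
    have hMcast : M = (2:ℝ) ^ epow i := by
      rw [hM, mpar_eq_two_pow]; push_cast; ring
    have hMpos : (0:ℝ) < M := by rw [hMcast]; positivity
    -- locating the support
    have hloc : ∀ k ∈ G, ∃ l, k ∈ (g l).support := by
      intro k hk
      have h1 := (hG k hk).1
      have h2 : k ∈ (∑ l, g l).support := Finsupp.support_smul h1
      have h3 := Finsupp.support_finset_sum h2
      simp only [Finset.mem_biUnion, Finset.mem_univ, true_and] at h3
      exact h3
    have happ : ∀ (l : Fin d) (k : ℕ), k ∈ (g l).support →
        |(M⁻¹ • ∑ l', g l') k| = M⁻¹ * |g l k| := by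
      intro l k hk
      rw [Finsupp.smul_apply, smul_eq_mul, sum_apply_of_mem hadm.2.1 hk, abs_mul,
        abs_of_pos (inv_pos.2 hMpos)]
    by_cases hcase : s ≤ epow i
    · -- the weight is too large: G must be empty
      have : G = ∅ := by
        rw [Finset.eq_empty_iff_forall_notMem]
        intro k hk
        obtain ⟨l, hl⟩ := hloc k hk
        have h1 := (hG k hk).2.2
        rw [happ l k hl] at h1
        have h2 : M⁻¹ * |g l k| ≤ M⁻¹ := by
          have := mul_le_mul_of_nonneg_left (waux_abs_le_one (hg l) k)
            (le_of_lt (inv_pos.2 hMpos))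
          simpa using this
        have h3 : M⁻¹ ≤ ((2:ℝ) ^ s)⁻¹ := by
          apply inv_anti₀ (by positivity)
          rw [hMcast]
          exact pow_le_pow_right₀ (by norm_num) hcase
        linarith
      rw [this]
      exact schreier_empty _
    · push_neg at hcase
      -- the weight index is below j
      have hilt : i < j := by
        rcases lt_or_gt_of_ne hij with h | h
        · exact h
        · exfalso
          have := epow_ge_of_gt h
          omega
      set s' : ℕ := s - epow i with hs'
      have hss' : s' + epow i = s := by
        have := epow_pos i; omega
      have hpow : (2:ℝ) ^ s = (2:ℝ) ^ s' * (2:ℝ) ^ epow i := by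
        rw [← pow_add, hss']
      set Gl : Fin d → Finset ℕ := fun l => G.filter (fun k => k ∈ (g l).support) with hGl
      have hGlsub : ∀ l, ∀ k ∈ Gl l, k ∈ (g l).support :=
        fun l k hk => (Finset.mem_filter.1 hk).2
      have hGlmem : ∀ l, Gl l ∈ Schreier (s' * (npar 2 (j - 1) + 1)) := by
        intro l
        refine ih l s' (by omega) (Gl l) ?_
        intro k hk
        have hkG := (Finset.mem_filter.1 hk).1
        have hks := hGlsub l k hk
        refine ⟨hks, (hG k hkG).2.1, ?_⟩
        have h1 := (hG k hkG).2.2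
        rw [happ l k hks] at h1
        have h2 : ((2:ℝ) ^ s')⁻¹ = M * ((2:ℝ) ^ s)⁻¹ := by
          rw [hMcast, hpow]
          field_simp
        rw [h2]
        calc M * ((2:ℝ) ^ s)⁻¹ < M * (M⁻¹ * |g l k|) :=
          mul_lt_mul_of_pos_left h1 hMpos
        _ = |g l k| := by field_simp
      have hGlord : ∀ l l' : Fin d, l < l' → FinsetLT (Gl l) (Gl l') := by
        intro l l' hll' a ha b hb
        exact hadm.2.1 l l' hll' a (hGlsub l a ha) b (hGlsub l' b hb)
      have hcov : G = Finset.univ.biUnion Gl := by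
        ext k
        simp only [hGl, Finset.mem_biUnion, Finset.mem_univ, true_and, Finset.mem_filter]
        constructor
        · intro hk
          obtain ⟨l, hl⟩ := hloc k hk
          exact ⟨l, hk, hl⟩
        · rintro ⟨l, hk, -⟩; exact hk
      -- supports of g are nonempty and strictly ordered
      have hsne : ∀ l, (g l).support.Nonempty := by
        intro l
        exact Finsupp.support_nonempty_iff.2 (hadm.1 l)
      have hminmono : StrictMono (fun l => minsupp (g l)) := by
        intro l l' hll'
        have m1 : minsupp (g l) ∈ (g l).support := sInf_mem_finset (hsne l)
        have m2 : minsupp (g l') ∈ (g l').support := sInf_mem_finset (hsne l')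
        exact hadm.2.1 l l' hll' _ m1 _ m2
      -- the set of minima of the nonempty blocks
      have hmins : (Finset.univ.filter (fun l => (Gl l).Nonempty)).image
          (fun l => sInf ((Gl l : Set ℕ))) ∈ Schreier (npar 2 i + 1) := by
        refine schreier_spreadSub _ hadm.2.2 ?_
        refine spreadSub_of_blocks hGlord ?_ hminmono
        intro l hl
        exact Nat.sInf_le (hGlsub l _ (sInf_mem_finset hl))
      have hcomp := schreier_comp (npar 2 i + 1) (by omega) (s' * (npar 2 (j - 1) + 1)) d Gl
        hGlmem hGlord hmins
      rw [hcov]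
      refine schreier_mono ?_ ?_ hcomp
      · omega
      · have hnle : npar 2 i ≤ npar 2 (j - 1) := npar_mono 2 (by omega)
        have hs1 : s' + 1 ≤ s := by have := epow_pos i; omega
        calc s' * (npar 2 (j - 1) + 1) + (npar 2 i + 1)
            ≤ s' * (npar 2 (j - 1) + 1) + (npar 2 (j - 1) + 1) := by omega
          _ = (s' + 1) * (npar 2 (j - 1) + 1) := by ring
          _ ≤ s * (npar 2 (j - 1) + 1) := Nat.mul_le_mul_right _ hs1
lemma bvec_apply (F : Finset ℕ) (c : ℕ → ℝ) (k : ℕ) :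
    bvec F c k = if k ∈ F then c k else 0 := by
  classical
  rw [bvec, Finsupp.finset_sum_apply]
  simp only [Finsupp.smul_apply, Finsupp.single_apply, smul_eq_mul, mul_ite, mul_one, mul_zero]
  exact Finset.sum_ite_eq' F k c

lemma arith_le {e n : ℕ} (he : 2 ≤ e) (hn : 1 ≤ n) :
    2 * e * (n + 1) + 1 ≤ 2 ^ (2 * 2 ^ e) * n := by
  have h1 : e + 2 ≤ 2 ^ e := by
    induction e, he using Nat.le_induction with
    | base => norm_num
    | succ e he ih =>
      have : 2 ^ (e + 1) = 2 * 2 ^ e := by ring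
      omega
  have h2 : e + 4 ≤ 2 * 2 ^ e := by omega
  have hA : 2 ^ (e + 4) ≤ 2 ^ (2 * 2 ^ e) := Nat.pow_le_pow_right (by norm_num) h2
  have h3 : 16 * (e + 2) ≤ 2 ^ (e + 4) := by
    have : 2 ^ (e + 4) = 16 * 2 ^ e := by ring
    omega
  nlinarith [hA, h3, Nat.mul_le_mul (le_trans h3 hA) hn]
/-- for `j ≥ 2` (Lean index `j` with `1 ≤ j`), `0 < ε < 1/m_j²` and
`x = ∑_{k ∈ F} c_k e_k` an `(n_j, ε)`-basic special convex combination, every functional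
`f` admitting a tree analysis avoiding the weight `m_j` satisfies `|f(x)| < 2/m_j²`. -/
theorem stmt_17 (j : ℕ) (hj : 1 ≤ j) (ε : ℝ) (hε : 0 < ε)
    (hε' : ε < 1 / (mpar 2 j : ℝ) ^ 2)
    (F : Finset ℕ) (c : ℕ → ℝ) (hscc : IsBSCC (npar 2 j) ε F c)
    (f : ℕ →₀ ℝ) (hf : WAux1Avoid j f) :
    |ev f (bvec F c)| < 2 / (mpar 2 j : ℝ) ^ 2 := by
  classical
  obtain ⟨hpos, hsum, hF, hsmall⟩ := hscc
  set m : ℝ := (mpar 2 j : ℝ) with hm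
  have hm2 : (2:ℝ) ≤ m := by rw [hm]; exact_mod_cast mpar_two_le j
  have hmpos : (0:ℝ) < m := by linarith
  have hm2pos : (0:ℝ) < m ^ 2 := by positivity
  have h0F : 0 ∉ F := schreier_not_mem_zero (npar_pos 2 j) hF
  set G : Finset ℕ := (f.support ∩ F).filter (fun k => (m ^ 2)⁻¹ < |f k|) with hG
  -- G is small in the Schreier sense
  have hGF : G ⊆ F := fun k hk =>
    (Finset.mem_inter.1 (Finset.mem_filter.1 hk).1).2
  have hGmem : G ∈ Schreier (npar 2 j - 1) := by
    have hpow2 : (2:ℝ) ^ (2 * epow j) = m ^ 2 := by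
      rw [mul_comm, pow_mul, hm, mpar_eq_two_pow]
      push_cast
      ring
    have hkey := key_lemma hj hf (2 * epow j) le_rfl G ?_
    · refine schreier_mono ?_ ?_ hkey
      · have h1 := epow_pos j
        exact Nat.mul_pos (by omega) (by omega)
      · -- 2 e (n+1) ≤ npar 2 j - 1
        have he2 : 2 ≤ epow j := by
          have h1 : epow 1 = 2 := rfl
          have := epow_mono hj
          rw [h1] at this
          exact this
        have hn1 : 1 ≤ npar 2 (j - 1) := npar_pos 2 (j - 1)
        have harith := arith_le he2 hn1
        have hnpj : npar 2 j = 2 ^ (2 * 2 ^ epow j) * npar 2 (j - 1) := by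
          obtain ⟨j', rfl⟩ : ∃ j', j = j' + 1 := ⟨j - 1, by omega⟩
          show 2 ^ (2 * mpar 2 (j' + 1)) * npar 2 j' = _
          rw [mpar_eq_two_pow]
          simp
        omega
    · intro k hk
      have hk1 := Finset.mem_filter.1 hk
      have hk2 := Finset.mem_inter.1 hk1.1
      refine ⟨hk2.1, ?_, ?_⟩
      · rcases Nat.eq_zero_or_pos k with rfl | h
        · exact absurd hk2.2 h0F
        · exact h
      · rw [hpow2]
        exact hk1.2
  have hGsum : ∑ k ∈ G, c k < ε := hsmall G hGF hGmem
  -- the pointwise estimate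
  have hbound : |ev f (bvec F c)| ≤ ∑ k ∈ f.support ∩ F, |f k| * c k := by
    rw [ev]
    refine le_trans (Finset.abs_sum_le_sum_abs _ _) ?_
    rw [← Finset.sum_filter_add_sum_filter_not f.support (fun k => k ∈ F)]
    have hzero : ∑ k ∈ f.support.filter (fun k => ¬ k ∈ F), |f k * bvec F c k| = 0 := by
      refine Finset.sum_eq_zero fun k hk => ?_
      have := (Finset.mem_filter.1 hk).2
      rw [bvec_apply, if_neg this, mul_zero, abs_zero]
    rw [hzero, add_zero, Finset.filter_mem_eq_inter]
    refine le_of_eq (Finset.sum_congr rfl fun k hk => ?_)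
    have hkF := (Finset.mem_inter.1 hk).2
    rw [bvec_apply, if_pos hkF, abs_mul, abs_of_nonneg (hpos k hkF)]
  -- split the sum
  have hsplit : ∑ k ∈ f.support ∩ F, |f k| * c k
      = ∑ k ∈ G, |f k| * c k
        + ∑ k ∈ (f.support ∩ F).filter (fun k => ¬ (m ^ 2)⁻¹ < |f k|), |f k| * c k := by
    rw [hG, Finset.sum_filter_add_sum_filter_not]
  have hterm1 : ∑ k ∈ G, |f k| * c k ≤ ∑ k ∈ G, c k := by
    refine Finset.sum_le_sum fun k hk => ?_
    have hc : 0 ≤ c k := hpos k (hGF hk)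
    calc |f k| * c k ≤ 1 * c k :=
      mul_le_mul_of_nonneg_right (waux_abs_le_one hf k) hc
    _ = c k := one_mul _
  have hterm2 : ∑ k ∈ (f.support ∩ F).filter (fun k => ¬ (m ^ 2)⁻¹ < |f k|), |f k| * c k
      ≤ (m ^ 2)⁻¹ := by
    have h1 : ∑ k ∈ (f.support ∩ F).filter (fun k => ¬ (m ^ 2)⁻¹ < |f k|), |f k| * c k
        ≤ ∑ k ∈ (f.support ∩ F).filter (fun k => ¬ (m ^ 2)⁻¹ < |f k|), (m ^ 2)⁻¹ * c k := by
      refine Finset.sum_le_sum fun k hk => ?_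
      have hkF := (Finset.mem_inter.1 (Finset.mem_filter.1 hk).1).2
      have hle : |f k| ≤ (m ^ 2)⁻¹ := not_lt.1 (Finset.mem_filter.1 hk).2
      exact mul_le_mul_of_nonneg_right hle (hpos k hkF)
    have h2 : ∑ k ∈ (f.support ∩ F).filter (fun k => ¬ (m ^ 2)⁻¹ < |f k|), (m ^ 2)⁻¹ * c k
        ≤ (m ^ 2)⁻¹ := by
      rw [← Finset.mul_sum]
      have h3 : ∑ k ∈ (f.support ∩ F).filter (fun k => ¬ (m ^ 2)⁻¹ < |f k|), c k
          ≤ ∑ k ∈ F, c k := by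
        refine Finset.sum_le_sum_of_subset_of_nonneg ?_ (fun k hk _ => hpos k hk)
        intro k hk
        exact (Finset.mem_inter.1 (Finset.mem_filter.1 hk).1).2
      rw [hsum] at h3
      calc (m ^ 2)⁻¹ * ∑ k ∈ (f.support ∩ F).filter (fun k => ¬ (m ^ 2)⁻¹ < |f k|), c k
          ≤ (m ^ 2)⁻¹ * 1 := mul_le_mul_of_nonneg_left h3 (by positivity)
        _ = (m ^ 2)⁻¹ := mul_one _
    linarith
  have hfin : |ev f (bvec F c)| < ε + (m ^ 2)⁻¹ := by
    calc |ev f (bvec F c)| ≤ ∑ k ∈ f.support ∩ F, |f k| * c k := hbound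
      _ = _ := hsplit
      _ < ε + (m ^ 2)⁻¹ := by
          have := lt_of_le_of_lt hterm1 hGsum
          linarith
  have : ε + (m ^ 2)⁻¹ < 2 / m ^ 2 := by
    rw [one_div] at hε'
    have : 2 / m ^ 2 = (m ^ 2)⁻¹ + (m ^ 2)⁻¹ := by
      field_simp
      ring
    linarith
  linarith
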